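/- Let W ∈ ℝ^{(n+1)×(n+1)} be symmetric with zero diagonal and nonnegative entries such that the graph on vertices {0,1,…,n} with edges {i,k} whenever W_{ik} > 0 is connected. Let L ∈ ℝ^{(n+1)×(n+1)} be the weighted Laplacian (L_{ii} = Σ_k W_{ik}, L_{ik} = −W_{ik} for i ≠ k), and let L_red ∈ ℝ^{n×n} be obtained from L by deleting the row and column of vertex 0. Then L_red is positive definite, and its inverse L_red⁻¹ has all entries nonnegative with strictly positive diagonal entries. -/

import Mathlib

open Finset Matrix

noncomputable section

/-- The weighted Laplacian of `W` with the row and column of vertex `0` deleted. -/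
def LapRed {n : ℕ} (W : Matrix (Fin (n + 1)) (Fin (n + 1)) ℝ) :
    Matrix (Fin n) (Fin n) ℝ := fun i k =>
  if i = k then ∑ j, W i.succ j else -W i.succ k.succ

lemma LapRed_eq {n : ℕ} (W : Matrix (Fin (n + 1)) (Fin (n + 1)) ℝ)
    (hWdiag : ∀ i, W i i = 0) (i k : Fin n) :
    LapRed W i k = (if i = k then ∑ j, W i.succ j else 0) - W i.succ k.succ := by
  unfold LapRed
  by_cases h : i = k <;> simp [h, hWdiag]

lemma bilin {n : ℕ} (W : Matrix (Fin (n + 1)) (Fin (n + 1)) ℝ)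
    (hWdiag : ∀ i, W i i = 0) (u v : Fin n → ℝ) :
    u ⬝ᵥ (LapRed W) *ᵥ v =
      (∑ i, (∑ j, W i.succ j) * (u i * v i)) -
        ∑ i, ∑ k, W i.succ k.succ * (u i * v k) := by
  simp only [dotProduct, mulVec, LapRed_eq W hWdiag]
  rw [← Finset.sum_sub_distrib]
  congr 1; ext i
  rw [Finset.mul_sum]
  have step : ∀ x : Fin n, u i * (((if i = x then ∑ j, W i.succ j else 0) - W i.succ x.succ) * v x)
      = (if i = x then (∑ j, W i.succ j) * (u i * v x) else 0) - W i.succ x.succ * (u i * v x) := by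
    intro x; by_cases h : i = x <;> simp [h] <;> ring
  rw [Finset.sum_congr rfl (fun x _ => step x), Finset.sum_sub_distrib,
    Finset.sum_ite_eq Finset.univ i (fun x => (∑ j, W i.succ j) * (u i * v x))]
  simp

lemma quad_eq {n : ℕ} (W : Matrix (Fin (n + 1)) (Fin (n + 1)) ℝ)
    (hWsymm : ∀ i k, W i k = W k i) (hWdiag : ∀ i, W i i = 0) (x : Fin n → ℝ) :
    x ⬝ᵥ (LapRed W) *ᵥ x =
      (∑ a, ∑ b, W a b * ((Fin.cases 0 x : Fin (n+1) → ℝ) a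
        - (Fin.cases 0 x : Fin (n+1) → ℝ) b) ^ 2) / 2 := by
  set y : Fin (n+1) → ℝ := Fin.cases 0 x with hy
  have hy0 : y 0 = 0 := rfl
  have hys : ∀ i : Fin n, y i.succ = x i := fun i => rfl
  rw [bilin W hWdiag]
  have e1 : ∑ a, ∑ b, W a b * (y a - y b) ^ 2
      = (∑ a, ∑ b, W a b * (y a)^2) + (∑ a, ∑ b, W a b * (y b)^2)
        - 2 * ∑ a, ∑ b, W a b * (y a * y b) := by
    simp only [← Finset.sum_add_distrib, ← Finset.sum_sub_distrib, Finset.mul_sum]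
    congr 1; ext a; congr 1; ext b; ring
  have e2 : (∑ a, ∑ b, W a b * (y b)^2) = ∑ a, ∑ b, W a b * (y a)^2 := by
    rw [Finset.sum_comm]
    congr 1; ext a; congr 1; ext b; rw [hWsymm]
  have e3 : ∑ a, ∑ b, W a b * (y a)^2 = ∑ i, (∑ j, W i.succ j) * (x i * x i) := by
    rw [Fin.sum_univ_succ]
    simp [hy0, hys, Finset.sum_mul, pow_two]
  have e4 : ∑ a, ∑ b, W a b * (y a * y b)
      = ∑ i, ∑ k, W i.succ k.succ * (x i * x k) := by
    rw [Fin.sum_univ_succ]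
    simp only [hy0, zero_mul, mul_zero, Finset.sum_const_zero, zero_add]
    congr 1; ext i
    rw [Fin.sum_univ_succ]
    simp [hy0, hys]
  rw [e1, e2, e3, e4]; ring

lemma reach_eq {V : Type*} {G : SimpleGraph V} {y : V → ℝ}
    (h : ∀ a b, G.Adj a b → y a = y b) {a b : V} (r : G.Reachable a b) : y a = y b := by
  obtain ⟨w⟩ := r
  induction w with
  | nil => rfl
  | cons h' _ ih => exact (h _ _ h').trans ih

theorem stmt18 {n : ℕ}
    (W : Matrix (Fin (n + 1)) (Fin (n + 1)) ℝ)
    (hWsymm : ∀ i k, W i k = W k i)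
    (hWdiag : ∀ i, W i i = 0)
    (hWnonneg : ∀ i k, 0 ≤ W i k)
    (G : SimpleGraph (Fin (n + 1)))
    (hGadj : ∀ i k, G.Adj i k ↔ 0 < W i k)
    (hGconn : G.Connected) :
    (LapRed W).PosDef ∧
      (∀ i k, 0 ≤ (LapRed W)⁻¹ i k) ∧
      ∀ i, 0 < (LapRed W)⁻¹ i i := by
  set A := LapRed W with hA
  -- Hermitian
  have hherm : A.IsHermitian := by
    ext i k
    simp only [conjTranspose_apply, star_trivial, hA, LapRed]
    by_cases h : i = k
    · simp [h]
    · simp [h, Ne.symm h, hWsymm]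
  -- positive definiteness
  have hpd : A.PosDef := by
    refine PosDef.of_dotProduct_mulVec_pos hherm (fun ⦃x⦄ hx => ?_)
    rw [star_trivial, quad_eq W hWsymm hWdiag]
    set y : Fin (n+1) → ℝ := Fin.cases 0 x with hy
    have hterm : ∀ a ∈ Finset.univ, ∀ b ∈ Finset.univ,
        (0:ℝ) ≤ W a b * (y a - y b)^2 := fun a _ b _ =>
      mul_nonneg (hWnonneg a b) (sq_nonneg _)
    have hnn : (0:ℝ) ≤ ∑ a, ∑ b, W a b * (y a - y b)^2 :=
      Finset.sum_nonneg fun a ha => Finset.sum_nonneg fun b hb => hterm a ha b hb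
    rcases lt_or_eq_of_le hnn with hlt | heq
    · positivity
    · exfalso
      -- all terms are zero
      have hz : ∀ a b, W a b * (y a - y b)^2 = 0 := by
        intro a b
        have h1 : ∑ a, ∑ b, W a b * (y a - y b)^2 = 0 := heq.symm
        have h2 := (Finset.sum_eq_zero_iff_of_nonneg
          (fun a ha => Finset.sum_nonneg fun b hb => hterm a ha b hb)).mp h1
        have h3 := (Finset.sum_eq_zero_iff_of_nonneg
          (fun b hb => hterm a (Finset.mem_univ a) b hb)).mp (h2 a (Finset.mem_univ a))
        exact h3 b (Finset.mem_univ b)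
      have hadj : ∀ a b, G.Adj a b → y a = y b := by
        intro a b hab
        have hW := (hGadj a b).mp hab
        have := hz a b
        have h4 : (y a - y b)^2 = 0 := by
          rcases mul_eq_zero.mp this with h | h
          · exact absurd h hW.ne'
          · exact h
        have := pow_eq_zero_iff (n := 2) (by norm_num) |>.mp h4
        linarith
      apply hx
      funext i
      have : y i.succ = y 0 := reach_eq hadj (hGconn i.succ 0)
      simpa [hy] using this
  refine ⟨hpd, ?_, ?_⟩
  · -- inverse entries nonneg
    intro i k
    have hdet : IsUnit A.det := hpd.isUnit.map (MonoidHom.id _) |> fun _ =>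
      (Matrix.isUnit_iff_isUnit_det A).mp hpd.isUnit
    set v : Fin n → ℝ := fun j => A⁻¹ j k with hv
    have hAv : A *ᵥ v = fun j => if j = k then (1:ℝ) else 0 := by
      funext j
      have := congrFun (congrFun (Matrix.mul_nonsing_inv A hdet) j) k
      simpa [Matrix.mul_apply, mulVec, dotProduct, Matrix.one_apply, hv] using this
    set m : Fin n → ℝ := fun j => max (-(v j)) 0 with hm
    set p : Fin n → ℝ := fun j => max (v j) 0 with hp
    have hmp : ∀ j, p j - m j = v j := fun j => max_zero_sub_max_neg_zero_eq_self (v j)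
    have hm0 : ∀ j, m j * p j = 0 := by
      intro j
      rcases le_or_gt 0 (v j) with h | h
      · simp [hm, hp, max_eq_right (neg_nonpos_of_nonneg h)]
      · simp [hp, max_eq_right h.le]
    have hmz : m = 0 := by
      by_contra hmne
      have hpos : 0 < m ⬝ᵥ A *ᵥ m := by
        have := hpd.dotProduct_mulVec_pos hmne
        rwa [star_trivial] at this
      -- m ⬝ᵥ A *ᵥ v = m k ≥ 0
      have h1 : m ⬝ᵥ A *ᵥ v = m k := by
        rw [hAv]
        simp [dotProduct]
      have h2 : (0:ℝ) ≤ m k := le_max_right _ _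
      -- v = p - m
      have hveq : v = fun j => p j - m j := by funext j; rw [hmp]
      have h3 : m ⬝ᵥ A *ᵥ v = m ⬝ᵥ A *ᵥ p - m ⬝ᵥ A *ᵥ m := by
        rw [hveq]
        have : (fun j => p j - m j) = p - m := rfl
        rw [this, mulVec_sub, dotProduct_sub]
      -- m ⬝ᵥ A *ᵥ p ≤ 0
      have h4 : m ⬝ᵥ A *ᵥ p ≤ 0 := by
        rw [bilin W hWdiag]
        have hfirst : ∑ j, (∑ l, W j.succ l) * (m j * p j) = 0 := by
          apply Finset.sum_eq_zero; intro j _; rw [hm0 j, mul_zero]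
        rw [hfirst, zero_sub, neg_nonpos]
        apply Finset.sum_nonneg; intro j _
        apply Finset.sum_nonneg; intro l _
        exact mul_nonneg (hWnonneg _ _)
          (mul_nonneg (le_max_right _ _) (le_max_right _ _))
      linarith
    have hmi : max (-(v i)) 0 = 0 := congrFun hmz i
    have hle := le_max_left (-(v i)) 0
    linarith
  · -- diagonal entries positive
    intro i
    have hinv : (A⁻¹).PosDef := hpd.inv
    have hne : (Pi.single i 1 : Fin n → ℝ) ≠ 0 := by
      intro h
      have := congrFun h i
      simp at this
    have := hinv.dotProduct_mulVec_pos hne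
    rw [star_trivial] at this
    have heq : (Pi.single i 1 : Fin n → ℝ) ⬝ᵥ A⁻¹ *ᵥ Pi.single i 1 = A⁻¹ i i := by
      simp [dotProduct, mulVec, Pi.single_apply]
    rwa [heq] at this
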